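/- Let q be an odd prime power and p = char F_q. Then in F_p[x], the identity ∑_{0 ≤ l ≤ q/2} C(-l, l) x^l = (1/2)[1 + (1+4x)^{(q-1)/2}] holds, where C(-l, l) denotes the generalized binomial coefficient (-l)(-l-1)⋯(-2l+1)/l!. -/

import Mathlib

open Polynomial

section Qside

open Ring Polynomial in
private lemma descPoch_half (k : ℕ) :
    (descPochhammer ℤ k).smeval (-(1/2) : ℚ) = (Nat.centralBinom k) * (k.factorial) / (-4)^k := by
  induction k with
  | zero => simp [descPochhammer_zero]
  | succ k ih =>
    rw [descPochhammer_succ_right, smeval_mul, ih, smeval_sub, smeval_X, smeval_natCast]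
    have : ((k+1) * Nat.centralBinom (k+1) : ℚ) = 2 * (2*k+1) * Nat.centralBinom k := by
      exact_mod_cast congrArg (Nat.cast : ℕ → ℚ) (Nat.succ_mul_centralBinom_succ k)
    rw [Nat.factorial_succ]
    push_cast
    rw [div_mul_eq_mul_div, div_eq_div_iff (pow_ne_zero _ (by norm_num)) (pow_ne_zero _ (by norm_num))]
    linear_combination (-((-4 : ℚ)^k * k.factorial)) * this

open Ring Polynomial in
private lemma descPoch_negone (k : ℕ) :
    (descPochhammer ℤ k).smeval (-1 : ℚ) = (-1)^k * (k.factorial) := by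
  induction k with
  | zero => simp [descPochhammer_zero]
  | succ k ih =>
    rw [descPochhammer_succ_right, smeval_mul, ih, smeval_sub, smeval_X, smeval_natCast]
    rw [Nat.factorial_succ]
    push_cast
    ring

open Ring Polynomial in
private lemma choose_half (k : ℕ) :
    Ring.choose (-(1/2) : ℚ) k = (Nat.centralBinom k : ℚ) / (-4)^k := by
  have h := Ring.descPochhammer_eq_factorial_smul_choose (-(1/2) : ℚ) k
  rw [descPoch_half] at h
  have hf : (k.factorial : ℚ) ≠ 0 := by exact_mod_cast k.factorial_ne_zero
  have h4 : ((-4 : ℚ))^k ≠ 0 := pow_ne_zero _ (by norm_num)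
  field_simp [nsmul_eq_mul] at h ⊢
  exact mul_left_cancel₀ hf (by linear_combination -h)

open Ring Polynomial in
private lemma choose_negone (k : ℕ) : Ring.choose (-1 : ℚ) k = (-1)^k := by
  have h := Ring.descPochhammer_eq_factorial_smul_choose (-1 : ℚ) k
  rw [descPoch_negone] at h
  have hf : (k.factorial : ℚ) ≠ 0 := by exact_mod_cast k.factorial_ne_zero
  field_simp [nsmul_eq_mul] at h ⊢
  exact mul_left_cancel₀ hf (by linear_combination -h)

open Finset in
private lemma centralBinom_conv (n : ℕ) :
    ∑ ij ∈ antidiagonal n, Nat.centralBinom ij.1 * Nat.centralBinom ij.2 = 4^n := by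
  have key := Ring.add_choose_eq (r := (-(1/2) : ℚ)) (s := (-(1/2) : ℚ)) n (Commute.all _ _)
  have : (-(1/2) : ℚ) + -(1/2) = -1 := by norm_num
  rw [this, choose_negone] at key
  have : ∀ ij ∈ antidiagonal n, Ring.choose (-(1/2):ℚ) ij.1 * Ring.choose (-(1/2):ℚ) ij.2
      = (Nat.centralBinom ij.1 * Nat.centralBinom ij.2 : ℚ) / (-4)^n := by
    intro ij hij
    rw [choose_half, choose_half, div_mul_div_comm, ← pow_add,
      (Finset.HasAntidiagonal.mem_antidiagonal.mp hij)]
  rw [Finset.sum_congr rfl this, ← Finset.sum_div] at key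
  have h4 : ((-4 : ℚ))^n ≠ 0 := pow_ne_zero _ (by norm_num)
  have : ((∑ ij ∈ antidiagonal n, Nat.centralBinom ij.1 * Nat.centralBinom ij.2 : ℕ) : ℚ)
      = ((4^n : ℕ) : ℚ) := by
    push_cast
    rw [eq_div_iff h4] at key
    have h14 : ((-1:ℚ))^n * (-4)^n = 4^n := by rw [← mul_pow]; norm_num
    linear_combination h14 - key
  exact_mod_cast this

end Qside

section PSside

variable {p : ℕ} [Fact p.Prime]
open PowerSeries Finset

private noncomputable def gps (p : ℕ) : PowerSeries (ZMod p) :=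
  PowerSeries.mk fun l => (-1)^l * (Nat.centralBinom l : ZMod p)

private lemma coeff_gps (l : ℕ) :
    (PowerSeries.coeff l) (gps p) = (-1)^l * (Nat.centralBinom l : ZMod p) :=
  PowerSeries.coeff_mk _ _

private lemma gps_sq : gps p * gps p = PowerSeries.mk fun n => (-4 : ZMod p)^n := by
  ext n
  rw [PowerSeries.coeff_mul, PowerSeries.coeff_mk]
  have : ∀ ij ∈ antidiagonal n,
      (PowerSeries.coeff ij.1) (gps p) * (PowerSeries.coeff ij.2) (gps p)
      = (-1)^n * ((Nat.centralBinom ij.1 * Nat.centralBinom ij.2 : ℕ) : ZMod p) := by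
    intro ij hij
    rw [coeff_gps, coeff_gps, ← Finset.HasAntidiagonal.mem_antidiagonal.mp hij, pow_add]
    push_cast; ring
  rw [Finset.sum_congr rfl this, ← Finset.mul_sum, ← Nat.cast_sum, centralBinom_conv]
  push_cast
  rw [← mul_pow]
  norm_num

private lemma geom_inv : (1 + 4 * PowerSeries.X) * (gps p * gps p) = 1 := by
  rw [gps_sq]
  have h4 : (4 : PowerSeries (ZMod p)) = PowerSeries.C (4 : ZMod p) := by
    simp [map_ofNat]
  have expand : (1 + 4 * PowerSeries.X) * PowerSeries.mk (fun n => (-4 : ZMod p)^n)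
      = PowerSeries.mk (fun n => (-4 : ZMod p)^n)
        + PowerSeries.C (4 : ZMod p) * (PowerSeries.X * PowerSeries.mk fun n => (-4 : ZMod p)^n) := by
    rw [← h4]; ring
  rw [expand]
  ext n
  cases n with
  | zero => simp
  | succ n => simp [PowerSeries.coeff_succ_X_mul, pow_succ]; ring

private lemma frob_poly (n q : ℕ) (hq : q = p ^ n) :
    (1 + 4 * Polynomial.X : Polynomial (ZMod p))^q = 1 + 4 * Polynomial.X ^ q := by
  subst hq
  rw [add_pow_char_pow, one_pow, mul_pow]
  congr 1
  congr 1
  have : (4 : Polynomial (ZMod p)) = Polynomial.C (4 : ZMod p) := by simp [map_ofNat]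
  rw [this, ← map_pow, ZMod.pow_card_pow]

private lemma frob_ps (n q : ℕ) (hq : q = p ^ n) :
    (1 + 4 * PowerSeries.X : PowerSeries (ZMod p))^q = 1 + 4 * PowerSeries.X ^ q := by
  have := congrArg (Polynomial.coeToPowerSeries.ringHom (R := ZMod p)) (frob_poly n q hq)
  simpa [map_pow, map_add, map_mul, map_one, map_ofNat] using this

/-- The key coefficient identity. -/
private lemma key_coeff (n q m : ℕ) (hq : q = p ^ n) (hqm : q = 2 * m + 1)
    (hp2 : (2 : ZMod p) ≠ 0) (l : ℕ) (hl : l ≤ m) :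
    ((1 + 4 * Polynomial.X : Polynomial (ZMod p))^m).coeff l
      = (-1)^l * (Nat.centralBinom l : ZMod p) := by
  set AS : PowerSeries (ZMod p) := (1 + 4 * PowerSeries.X)^m with hAS
  set g : PowerSeries (ZMod p) := gps p with hg
  have hsq : AS * AS * (1 + 4 * PowerSeries.X) = 1 + 4 * PowerSeries.X ^ q := by
    rw [← frob_ps n q hq, hAS, ← pow_add, ← pow_succ]
    congr 1
    omega
  have hAA : AS * AS = g * g + PowerSeries.X ^ q * (4 * (g * g)) := by
    calc AS * AS = AS * AS * ((1 + 4 * PowerSeries.X) * (g * g)) := by rw [geom_inv]; ring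
    _ = (AS * AS * (1 + 4 * PowerSeries.X)) * (g * g) := by ring
    _ = (1 + 4 * PowerSeries.X ^ q) * (g * g) := by rw [hsq]
    _ = g * g + PowerSeries.X ^ q * (4 * (g * g)) := by ring
  set u : PowerSeries (ZMod p) := AS + g with hu
  have hcu : PowerSeries.constantCoeff u ≠ 0 := by
    have h1 : PowerSeries.constantCoeff AS = 1 := by
      rw [hAS, map_pow, map_add, map_mul, map_one]
      simp
    have h2 : PowerSeries.constantCoeff g = 1 := by
      have := coeff_gps (p := p) 0
      simpa [PowerSeries.coeff_zero_eq_constantCoeff] using this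
    rw [hu, map_add, h1, h2]
    exact fun h => hp2 (by rw [← h]; norm_num)
  have huinv : u * u⁻¹ = 1 := PowerSeries.mul_inv_cancel _ hcu
  have hdiff : AS - g = PowerSeries.X ^ q * (4 * (g * g) * u⁻¹) := by
    calc AS - g = ((AS - g) * u) * u⁻¹ := by rw [mul_assoc, huinv, mul_one]
    _ = (AS * AS - g * g) * u⁻¹ := by rw [hu]; ring_nf
    _ = (PowerSeries.X ^ q * (4 * (g * g))) * u⁻¹ := by rw [hAA]; ring
    _ = PowerSeries.X ^ q * (4 * (g * g) * u⁻¹) := by ring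
  have hcoeff : (PowerSeries.coeff l) (AS - g) = 0 := by
    rw [hdiff, PowerSeries.coeff_X_pow_mul']
    rw [if_neg (by omega)]
  rw [map_sub] at hcoeff
  have : (PowerSeries.coeff l) AS = (PowerSeries.coeff l) g := sub_eq_zero.mp hcoeff
  rw [coeff_gps] at this
  rw [← this, hAS]
  have hpoly : ((1 + 4 * Polynomial.X : Polynomial (ZMod p))^m : Polynomial (ZMod p)).coeff l
      = (PowerSeries.coeff l) (((1 + 4 * Polynomial.X : Polynomial (ZMod p))^m : Polynomial (ZMod p)) : PowerSeries (ZMod p)) := by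
    rw [Polynomial.coeff_coe]
  rw [hpoly]
  congr 1
  have h4p : ((4 : Polynomial (ZMod p)) : PowerSeries (ZMod p)) = 4 := by
    rw [show (4 : Polynomial (ZMod p)) = Polynomial.C 4 from (map_ofNat Polynomial.C 4).symm, Polynomial.coe_C]
    simp [map_ofNat]
  rw [Polynomial.coe_pow, Polynomial.coe_add, Polynomial.coe_mul, Polynomial.coe_one,
    Polynomial.coe_X, h4p]

end PSside

private lemma centralBinom_eq_two_mul (k : ℕ) (hk : 1 ≤ k) :
    Nat.centralBinom k = 2 * ((2 * k - 1).choose k) := by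
  obtain ⟨j, rfl⟩ : ∃ j, k = j + 1 := ⟨k - 1, by omega⟩
  have h1 : 2 * (j + 1) = (2 * j + 1) + 1 := by ring
  have h2 : 2 * (j + 1) - 1 = 2 * j + 1 := by omega
  rw [Nat.centralBinom, h2, h1, Nat.choose_succ_succ]
  have h4 : (2 * j + 1).choose j = (2 * j + 1).choose (j + 1) := by
    have := Nat.choose_symm (n := 2 * j + 1) (k := j + 1) (by omega)
    simpa [show 2 * j + 1 - (j + 1) = j by omega] using this
  simp only [Nat.succ_eq_add_one] at *
  omega

/-- For odd prime power `q = pⁿ`, in `F_p[x]` we have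
`∑_{0 ≤ l ≤ q/2} C(-l, l) xˡ = (1/2)[1 + (1+4x)^((q-1)/2)]`,
where `C(-l, l) = (-1)ˡ · C(2l-1, l)` is the generalized binomial coefficient. -/
theorem stmt_1 (p n q : ℕ) (hp : p.Prime) (hn : 0 < n) (hq : q = p ^ n)
    (hodd : Odd q) :
    ∑ l ∈ Finset.range (q / 2 + 1),
        C ((((-1) ^ l * ((2 * l - 1).choose l : ℤ) : ℤ) : ZMod p)) * X ^ l
      = C ((2 : ZMod p)⁻¹) * (1 + (1 + 4 * X : (ZMod p)[X]) ^ ((q - 1) / 2)) := by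
  haveI : Fact p.Prime := ⟨hp⟩
  obtain ⟨m, hm⟩ := hodd
  have hqm : q = 2 * m + 1 := by omega
  have hq2 : q / 2 = m := by omega
  have hq12 : (q - 1) / 2 = m := by omega
  have hpodd : p ≠ 2 := by
    rintro rfl
    have : (2 : ℕ) ∣ q := by rw [hq]; exact dvd_pow_self 2 hn.ne'
    omega
  have hp2 : (2 : ZMod p) ≠ 0 := by
    have : ((2 : ℕ) : ZMod p) ≠ 0 := by
      rw [Ne, ZMod.natCast_eq_zero_iff]
      exact fun h => hpodd ((Nat.prime_dvd_prime_iff_eq hp Nat.prime_two).mp h)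
    simpa using this
  rw [hq2, hq12]
  ext k
  rw [Polynomial.finset_sum_coeff]
  simp only [Polynomial.coeff_C_mul, Polynomial.coeff_X_pow, mul_ite, mul_one, mul_zero]
  rw [Finset.sum_ite_eq (Finset.range (m + 1)) k]
  rw [Polynomial.coeff_add, Polynomial.coeff_one]
  by_cases hk : k ≤ m
  · rw [if_pos (Finset.mem_range.mpr (by omega))]
    rw [key_coeff n q m hq hqm hp2 k hk]
    rw [eq_inv_mul_iff_mul_eq₀ hp2]
    rcases Nat.eq_zero_or_pos k with rfl | hk1
    · norm_num
    · rw [if_neg (by omega)]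
      have := centralBinom_eq_two_mul k hk1
      have hcast : (Nat.centralBinom k : ZMod p) = 2 * (((2 * k - 1).choose k : ℕ) : ZMod p) := by
        rw [this]; push_cast; ring
      rw [zero_add, hcast]
      push_cast
      ring
  · rw [if_neg (by simp; omega)]
    have hdeg : ((1 + 4 * X : (ZMod p)[X]) ^ m).natDegree ≤ m := by
      refine le_trans (Polynomial.natDegree_pow_le) ?_
      have : (1 + 4 * X : (ZMod p)[X]).natDegree ≤ 1 := by
        compute_degree
      nlinarith
    rw [Polynomial.coeff_eq_zero_of_natDegree_lt (by omega)]
    rw [if_neg (by omega)]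
    ring
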